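/- Under the hypotheses above (|ψ_t| ≤ m, supermartingale-type drift E[ψ_{t+1}|F_t] ≤ ψ_t, and E[(ψ_{t+1}−ψ_t)²|F_t] ≥ c on {|ψ_t| < m}), the process Z_t defined by Z_t = ψ_t² − 2mψ_t − ct for t < t₀ and Z_t = 3m² − c·t₀ for t ≥ t₀ is a submartingale. -/

import Mathlib

open MeasureTheory

open scoped Classical in
theorem stmt_13_aux {Ω : Type*} {m0 : MeasurableSpace Ω} {μ : Measure Ω}
    [IsProbabilityMeasure μ] (ℱ : Filtration ℕ m0)
    (ψ : ℕ → Ω → ℝ) (m c : ℝ) (hc : 0 < c)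
    (hbdd : ∀ t ω, |ψ t ω| ≤ m)
    (hsuper : Supermartingale ψ ℱ μ)
    (hvar : ∀ t, ∀ᵐ ω ∂μ, |ψ t ω| < m →
      c ≤ (μ[fun ω' => (ψ (t + 1) ω' - ψ t ω') ^ 2|ℱ t]) ω)
    (T : Ω → ℕ)
    (hTmem : ∀ ω, |ψ (T ω) ω| = m)
    (hTle : ∀ ω s, |ψ s ω| = m → T ω ≤ s) :
    Submartingale
      (fun t ω =>
        if t < T ω then
          ψ t ω ^ 2 - 2 * m * ψ t ω - c * t
        else 3 * m ^ 2 - c * (T ω : ℕ))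
      ℱ μ := by
  have hΩ : Nonempty Ω := by
    rcases isEmpty_or_nonempty Ω with h | h
    · exfalso
      have h1 : μ Set.univ = 1 := measure_univ
      rw [Set.univ_eq_empty_iff.2 h, measure_empty] at h1
      exact zero_ne_one h1
    · exact h
  have hm0 : 0 ≤ m := by
    obtain ⟨ω⟩ := hΩ
    exact le_trans (abs_nonneg _) (hbdd 0 ω)
  -- basic facts about T
  have hlt' : ∀ ω j, j < T ω → |ψ j ω| < m := by
    intro ω j hj
    rcases lt_or_eq_of_le (hbdd j ω) with h | h
    · exact h
    · exact absurd (hTle ω j h) (by omega)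
  have hltT : ∀ (t : ℕ) ω, t < T ω ↔ ∀ s ≤ t, |ψ s ω| < m := by
    intro t ω
    constructor
    · intro h s hs
      exact hlt' ω s (lt_of_le_of_lt hs h)
    · intro h
      by_contra hle
      push_neg at hle
      exact absurd (hTmem ω) (ne_of_lt (h _ hle))
  -- measurability facts
  have hψ : ∀ s, Measurable[ℱ s] (ψ s) := fun s => (hsuper.stronglyAdapted s).measurable
  have hsetlt : ∀ s, MeasurableSet[ℱ s] {ω | |ψ s ω| < m} := fun s =>
    (hψ s) (measurableSet_lt measurable_abs measurable_const)
  have hseteq : ∀ s, MeasurableSet[ℱ s] {ω | |ψ s ω| = m} := fun s =>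
    (hψ s) (measurable_abs (measurableSet_singleton m))
  have hA : ∀ t : ℕ, MeasurableSet[ℱ t] {ω | t < T ω} := by
    intro t
    have heq : {ω | t < T ω} = ⋂ s ∈ Finset.range (t + 1), {ω | |ψ s ω| < m} := by
      ext ω
      simp only [Set.mem_setOf_eq, Set.mem_iInter, Finset.mem_range, Nat.lt_succ_iff]
      exact hltT t ω
    rw [heq]
    exact Finset.measurableSet_biInter _ fun s hs =>
      ℱ.mono (Nat.lt_succ_iff.mp (Finset.mem_range.mp hs)) _ (hsetlt s)
  have hTsingle : ∀ k : ℕ, MeasurableSet[ℱ k] {ω | T ω = k} := by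
    intro k
    have heq : {ω | T ω = k} =
        {ω | |ψ k ω| = m} ∩ ⋂ j ∈ Finset.range k, {ω | |ψ j ω| < m} := by
      ext ω
      simp only [Set.mem_setOf_eq, Set.mem_inter_iff, Set.mem_iInter, Finset.mem_range]
      constructor
      · rintro rfl
        exact ⟨hTmem ω, fun j hj => hlt' ω j hj⟩
      · rintro ⟨h1, h2⟩
        have hle := hTle ω k h1
        rcases lt_or_eq_of_le hle with h | h
        · exact absurd (hTmem ω) (ne_of_lt (h2 _ h))
        · exact h
    rw [heq]
    exact (hseteq k).inter (Finset.measurableSet_biInter _ fun j hj =>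
      ℱ.mono (le_of_lt (Finset.mem_range.mp hj)) _ (hsetlt j))
  have hTm : ∀ t : ℕ, Measurable[ℱ t] (fun ω => min (T ω) t) := by
    intro t
    refine @measurable_to_countable' ℕ Ω _ _ (ℱ t) (fun ω => min (T ω) t) ?_
    intro k
    rcases lt_trichotomy k t with hk | hk | hk
    · have heq : (fun ω => min (T ω) t) ⁻¹' {k} = {ω | T ω = k} := by
        ext ω
        simp only [Set.mem_preimage, Set.mem_singleton_iff, Set.mem_setOf_eq]
        omega
      rw [heq]
      exact ℱ.mono hk.le _ (hTsingle k)
    · subst hk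
      have heq : (fun ω => min (T ω) k) ⁻¹' {k} =
          (⋃ j ∈ Finset.range k, {ω | T ω = j})ᶜ := by
        ext ω
        simp only [Set.mem_preimage, Set.mem_singleton_iff, Set.mem_compl_iff,
          Set.mem_iUnion, Finset.mem_range, Set.mem_setOf_eq]
        push_neg
        constructor
        · intro hmin j hj
          omega
        · intro hj
          have hk2 : k ≤ T ω := by
            by_contra hlt
            push_neg at hlt
            exact hj (T ω) hlt rfl
          omega
      rw [heq]
      exact (Finset.measurableSet_biUnion _ fun j hj =>
        ℱ.mono (le_of_lt (Finset.mem_range.mp hj)) _ (hTsingle j)).compl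
    · have heq : (fun ω => min (T ω) t) ⁻¹' {k} = ∅ := by
        ext ω
        simp only [Set.mem_preimage, Set.mem_singleton_iff, Set.mem_empty_iff_false,
          iff_false]
        omega
      rw [heq]
      exact @MeasurableSet.empty Ω (ℱ t)
  -- the process
  set Z : ℕ → Ω → ℝ := fun t ω =>
    if t < T ω then ψ t ω ^ 2 - 2 * m * ψ t ω - c * t
    else 3 * m ^ 2 - c * (T ω : ℕ) with hZdef
  have hZapp : ∀ (t : ℕ) ω, Z t ω =
      (if t < T ω then ψ t ω ^ 2 - 2 * m * ψ t ω - c * t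
       else 3 * m ^ 2 - c * (T ω : ℕ)) := fun _ _ => rfl
  have hZmeas : ∀ t, StronglyMeasurable[ℱ t] (Z t) := by
    intro t
    have heq : Z t = fun ω =>
        if t < T ω then ψ t ω ^ 2 - 2 * m * ψ t ω - c * t
        else 3 * m ^ 2 - c * ((min (T ω) t : ℕ) : ℝ) := by
      funext ω
      rw [hZapp]
      split_ifs with h
      · rfl
      · have : min (T ω) t = T ω := min_eq_left (by omega)
        rw [this]
    rw [heq]
    have m1 : Measurable[ℱ t] (ψ t) := hψ t
    have m2 : Measurable[ℱ t] (fun ω => ((min (T ω) t : ℕ) : ℝ)) :=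
      measurable_from_top.comp (hTm t)
    have hthen : Measurable[ℱ t] (fun ω => ψ t ω ^ 2 - 2 * m * ψ t ω - c * t) :=
      ((m1.pow_const 2).sub (m1.const_mul (2 * m))).sub_const (c * t)
    have helse : Measurable[ℱ t]
        (fun ω => 3 * m ^ 2 - c * ((min (T ω) t : ℕ) : ℝ)) :=
      (m2.const_mul c).const_sub (3 * m ^ 2)
    exact (Measurable.ite (hA t) hthen helse).stronglyMeasurable
  -- generic integrability from boundedness
  have hInt : ∀ (f : Ω → ℝ) (C : ℝ), Measurable f → (∀ ω, |f ω| ≤ C) →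
      Integrable f μ := by
    intro f C hf hb
    refine ⟨hf.aestronglyMeasurable, HasFiniteIntegral.of_bounded (C := C) ?_⟩
    exact Filter.Eventually.of_forall (fun ω => by simpa using hb ω)
  have hψm0 : ∀ s, Measurable (ψ s) := fun s => (hψ s).mono (ℱ.le s) le_rfl
  have hZint : ∀ t, Integrable (Z t) μ := by
    intro t
    refine hInt (Z t) (3 * m ^ 2 + c * t) ((hZmeas t).measurable.mono (ℱ.le t) le_rfl) ?_
    intro ω
    rw [hZapp]
    have h1 := abs_le.mp (hbdd t ω)
    split_ifs with h
    · rw [abs_le]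
      constructor <;>
        nlinarith [sq_nonneg (ψ t ω - m), sq_nonneg (ψ t ω + m), sq_nonneg m,
          mul_nonneg hc.le (Nat.cast_nonneg t : (0:ℝ) ≤ t),
          mul_nonneg hm0 (by linarith : (0:ℝ) ≤ m + ψ t ω),
          mul_nonneg hm0 (by linarith : (0:ℝ) ≤ m - ψ t ω)]
    · have h2 : (T ω : ℝ) ≤ t := by
        have : T ω ≤ t := by omega
        exact_mod_cast this
      have h3 : (0:ℝ) ≤ (T ω : ℕ) := Nat.cast_nonneg _
      rw [abs_le]
      constructor <;> nlinarith [mul_nonneg hc.le h3, mul_le_mul_of_nonneg_left h2 hc.le]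
  -- the submartingale property
  refine submartingale_nat (fun t => hZmeas t) hZint ?_
  intro t
  set δ : Ω → ℝ := fun ω => ψ (t + 1) ω - ψ t ω with hδdef
  set A : Set Ω := {ω | t < T ω} with hAdef
  set h : Ω → ℝ := fun ω => δ ω ^ 2 + 2 * (ψ t ω - m) * δ ω - c with hhdef
  set g : Ω → ℝ := A.indicator h with hgdef
  have hδapp : ∀ ω, δ ω = ψ (t + 1) ω - ψ t ω := fun _ => rfl
  have hhapp : ∀ ω, h ω = δ ω ^ 2 + 2 * (ψ t ω - m) * δ ω - c := fun _ => rfl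
  -- bounds on building blocks
  have hδbdd : ∀ ω, |δ ω| ≤ 2 * m := by
    intro ω
    have h1 := abs_le.mp (hbdd (t + 1) ω)
    have h2 := abs_le.mp (hbdd t ω)
    rw [hδapp, abs_le]
    constructor <;> [linarith; linarith]
  have hδmeas : Measurable δ := (hψm0 (t + 1)).sub (hψm0 t)
  have hhbdd : ∀ ω, |h ω| ≤ 4 * m ^ 2 + 8 * m ^ 2 + c := by
    intro ω
    have h1 := abs_le.mp (hδbdd ω)
    have h2 := abs_le.mp (hbdd t ω)
    rw [hhapp, abs_le]
    constructor <;> nlinarith [sq_nonneg (δ ω), sq_nonneg (δ ω - 2 * m),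
      sq_nonneg (δ ω + 2 * m), sq_nonneg (ψ t ω - m + δ ω), sq_nonneg (ψ t ω - m - δ ω),
      sq_nonneg m]
  have hhmeas : Measurable h :=
    ((hδmeas.pow_const 2).add ((measurable_const.mul ((hψm0 t).sub measurable_const)).mul
      hδmeas)).sub measurable_const
  have hhint : Integrable h μ := hInt h _ hhmeas hhbdd
  have hAm0 : MeasurableSet A := ℱ.le t _ (hA t)
  have hgint : Integrable g μ := hhint.indicator hAm0
  -- pointwise inequality  Z t + g ≤ Z (t+1)
  have hpt : ∀ ω, Z t ω + g ω ≤ Z (t + 1) ω := by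
    intro ω
    rw [hZapp, hZapp, hgdef, Set.indicator_apply]
    by_cases hmem : ω ∈ A
    · have ht1 : t < T ω := hmem
      simp only [hmem, if_pos ht1, if_true]
      rw [hhapp, hδapp]
      by_cases ht2 : t + 1 < T ω
      · rw [if_pos ht2]
        push_cast
        ring_nf
        nlinarith [sq_nonneg (ψ t ω)]
      · rw [if_neg ht2]
        have hTeq : T ω = t + 1 := by omega
        rw [hTeq]
        have hb := abs_le.mp (hbdd (t + 1) ω)
        push_cast
        nlinarith
    · have ht1 : ¬ t < T ω := hmem
      have ht2 : ¬ t + 1 < T ω := by omega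
      simp only [hmem, if_neg ht1, if_neg ht2, if_false]
      simp
  -- conditional expectation of g is nonneg
  have hcondg : (0 : Ω → ℝ) ≤ᵐ[μ] μ[g|ℱ t] := by
    have hind := condExp_indicator hhint (hA t)
    -- compute μ[h | ℱ t]
    have hδ2int : Integrable (fun ω => δ ω ^ 2) μ := by
      refine hInt _ (4 * m ^ 2) (hδmeas.pow_const 2) ?_
      intro ω
      have h1 := abs_le.mp (hδbdd ω)
      rw [abs_le]
      constructor <;> nlinarith [sq_nonneg (δ ω)]
    have hfmeas : StronglyMeasurable[ℱ t] (fun ω => 2 * (ψ t ω - m)) :=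
      (((hsuper.stronglyAdapted t).sub stronglyMeasurable_const).const_mul 2)
    have hprodint : Integrable (fun ω => 2 * (ψ t ω - m) * δ ω) μ := by
      refine hInt _ (4 * m * (2 * m)) ((measurable_const.mul ((hψm0 t).sub
        measurable_const)).mul hδmeas) ?_
      intro ω
      have h1 := abs_le.mp (hδbdd ω)
      have h2 := abs_le.mp (hbdd t ω)
      rw [abs_le]
      constructor <;> nlinarith [sq_nonneg m]
    have hδint : Integrable δ μ := (hsuper.integrable (t + 1)).sub (hsuper.integrable t)
    have hmul := condExp_mul_of_stronglyMeasurable_left (μ := μ) hfmeas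
      (by exact hprodint) hδint
    -- μ[δ | ℱ t] ≤ 0 a.e.
    have hδcond : ∀ᵐ ω ∂μ, (μ[δ|ℱ t]) ω ≤ 0 := by
      have h1 : μ[δ|ℱ t] =ᵐ[μ] μ[ψ (t + 1)|ℱ t] - μ[ψ t|ℱ t] :=
        condExp_sub (hsuper.integrable (t + 1)) (hsuper.integrable t) _
      have h2 : μ[ψ (t + 1)|ℱ t] ≤ᵐ[μ] ψ t := hsuper.condExp_ae_le (Nat.le_succ t)
      have h3 : μ[ψ t|ℱ t] =ᵐ[μ] ψ t :=
        Filter.EventuallyEq.of_eq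
          (condExp_of_stronglyMeasurable (ℱ.le t) (hsuper.stronglyAdapted t) (hsuper.integrable t))
      filter_upwards [h1, h2, h3] with ω e1 e2 e3
      rw [e1, Pi.sub_apply, e3]
      linarith
    -- decompose μ[h|ℱ t]
    have hsum : μ[h|ℱ t] =ᵐ[μ]
        (fun ω => (μ[fun ω' => δ ω' ^ 2|ℱ t]) ω + 2 * (ψ t ω - m) * (μ[δ|ℱ t]) ω - c) := by
      have e1 : μ[h|ℱ t] =ᵐ[μ]
          μ[(fun ω => δ ω ^ 2 + 2 * (ψ t ω - m) * δ ω)|ℱ t] - μ[(fun _ => c)|ℱ t] := by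
        have := condExp_sub (μ := μ) (m := ℱ t)
          (f := fun ω => δ ω ^ 2 + 2 * (ψ t ω - m) * δ ω) (g := fun _ => c)
          (hδ2int.add hprodint) (integrable_const c)
        exact this
      have e2 : μ[(fun ω => δ ω ^ 2 + 2 * (ψ t ω - m) * δ ω)|ℱ t] =ᵐ[μ]
          μ[(fun ω => δ ω ^ 2)|ℱ t] + μ[(fun ω => 2 * (ψ t ω - m) * δ ω)|ℱ t] :=
        condExp_add hδ2int hprodint _
      have e3 : μ[(fun _ : Ω => c)|ℱ t] = fun _ => c := condExp_const (ℱ.le t) c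
      filter_upwards [e1, e2, hmul] with ω f1 f2 f3
      rw [f1, Pi.sub_apply, e3, f2, Pi.add_apply]
      have : (μ[(fun ω' => 2 * (ψ t ω' - m) * δ ω')|ℱ t]) ω
          = 2 * (ψ t ω - m) * (μ[δ|ℱ t]) ω := by
        have : (fun ω' => 2 * (ψ t ω' - m) * δ ω') = (fun ω' => 2 * (ψ t ω' - m)) * δ := by
          funext ω'; simp [Pi.mul_apply]
        rw [this, f3]
        simp [Pi.mul_apply]
      rw [this]
    -- combine
    filter_upwards [hind, hsum, hδcond, hvar t] with ω e1 e2 e3 e4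
    rw [Pi.zero_apply, e1, Set.indicator_apply]
    by_cases hmem : ω ∈ A
    · rw [if_pos hmem, e2]
      have hψlt : |ψ t ω| < m := hlt' ω t hmem
      have hv := e4 hψlt
      have hδ2eq : (μ[fun ω' => (ψ (t + 1) ω' - ψ t ω') ^ 2|ℱ t]) ω
          = (μ[fun ω' => δ ω' ^ 2|ℱ t]) ω := rfl
      rw [hδ2eq] at hv
      have hψle : ψ t ω ≤ m := (abs_le.mp (hbdd t ω)).2
      nlinarith [mul_nonneg (by linarith : (0:ℝ) ≤ m - ψ t ω)
        (by linarith : (0:ℝ) ≤ -(μ[δ|ℱ t]) ω)]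
    · rw [if_neg hmem]
  -- conclude
  have hsumint : Integrable (Z t + g) μ := (hZint t).add hgint
  have hmono := condExp_mono (m := ℱ t) hsumint (hZint (t + 1))
    (Filter.Eventually.of_forall hpt)
  have hZtcond : μ[Z t|ℱ t] = Z t :=
    condExp_of_stronglyMeasurable (ℱ.le t) (hZmeas t) (hZint t)
  have hadd : μ[Z t + g|ℱ t] =ᵐ[μ] μ[Z t|ℱ t] + μ[g|ℱ t] := condExp_add (hZint t) hgint _
  filter_upwards [hmono, hadd, hcondg] with ω e1 e2 e3
  rw [e2, Pi.add_apply, hZtcond] at e1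
  have := e3
  rw [Pi.zero_apply] at this
  linarith

open scoped Classical in
/-- With `|ψ_t| ≤ m`, supermartingale-type drift `E[ψ_{t+1}|F_t] ≤ ψ_t`, and
`E[(ψ_{t+1} - ψ_t)²|F_t] ≥ c` on `{|ψ_t| < m}`, the process
`Z_t = ψ_t² - 2mψ_t - ct` for `t < t₀` and `Z_t = 3m² - c·t₀` for `t ≥ t₀` is a
submartingale, where `t₀ = min{t : |ψ_t| = m}`. -/
theorem stmt_13 {Ω : Type*} {m0 : MeasurableSpace Ω} {μ : Measure Ω}
    [IsProbabilityMeasure μ] (ℱ : Filtration ℕ m0)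
    (ψ : ℕ → Ω → ℝ) (m c : ℝ) (hc : 0 < c)
    (hbdd : ∀ t ω, |ψ t ω| ≤ m)
    (hsuper : Supermartingale ψ ℱ μ)
    (hvar : ∀ t, ∀ᵐ ω ∂μ, |ψ t ω| < m →
      c ≤ (μ[fun ω' => (ψ (t + 1) ω' - ψ t ω') ^ 2|ℱ t]) ω)
    (hhit : ∀ ω, ∃ t, |ψ t ω| = m) :
    Submartingale
      (fun t ω =>
        if t < sInf {s : ℕ | |ψ s ω| = m} then
          ψ t ω ^ 2 - 2 * m * ψ t ω - c * t
        else 3 * m ^ 2 - c * (sInf {s : ℕ | |ψ s ω| = m} : ℕ))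
      ℱ μ := by
  exact stmt_13_aux ℱ ψ m c hc hbdd hsuper hvar
    (fun ω => sInf {s : ℕ | |ψ s ω| = m})
    (fun ω => Nat.sInf_mem (hhit ω))
    (fun ω s hs => Nat.sInf_le hs)
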